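/- Let (mu, alpha) be a pair of binary sequences in V'_2 such that sigma^m(mu) = alpha and sigma^n(alpha) = mu for some positive integers m, n. Then (mu, alpha) is an isolated point of V'_2: there exists epsilon > 0 such that any (mu', alpha') in V'_2 within distance epsilon of (mu, alpha) equals (mu, alpha). -/
import Mathlib


/-- The one-sided left shift on binary sequences. -/
def shift (x : ℕ → Bool) : ℕ → Bool := fun n => x (n + 1)

/-- Strict lexicographic order on binary sequences (`false < true`). -/
def lexLt (x y : ℕ → Bool) : Prop :=
  ∃ k : ℕ, (∀ i < k, x i = y i) ∧ x k < y k

/-- Non-strict lexicographic order on binary sequences. -/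
def lexLe (x y : ℕ → Bool) : Prop := lexLt x y ∨ x = y

/-- The symbolic set `V'_2`. -/
def V2' : Set ((ℕ → Bool) × (ℕ → Bool)) :=
  {p | p.1 0 = false ∧ p.2 0 = true ∧
    (∀ m : ℕ, lexLe p.1 (shift^[m] p.1) ∧ lexLe (shift^[m] p.1) p.2) ∧
    (∀ n : ℕ, lexLe p.1 (shift^[n] p.2) ∧ lexLe (shift^[n] p.2) p.2)}

open Classical in
/-- The metric `d((c_i),(e_i)) = 2^{-min{i : c_i ≠ e_i}}` on binary sequences. -/
noncomputable def seqDist (x y : ℕ → Bool) : ℝ :=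
  if h : x = y then 0
  else (2 : ℝ)⁻¹ ^ Nat.find (show ∃ i, x i ≠ y i by
    by_contra hc
    push_neg at hc
    exact h (funext hc))

lemma shift_iter (x : ℕ → Bool) (k i : ℕ) : shift^[k] x i = x (i + k) := by
  induction k generalizing x i with
  | zero => rfl
  | succ k ih =>
    rw [Function.iterate_succ_apply, ih]
    rfl

lemma lexLt_irrefl' {x y : ℕ → Bool} (h : lexLt x y) (h' : lexLe y x) : False := by
  obtain ⟨k, hk, hlt⟩ := h
  rcases h' with ⟨k', hk', hlt'⟩ | rfl
  · rcases lt_trichotomy k k' with hc | rfl | hc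
    · exact (ne_of_lt hlt) (hk' k hc).symm
    · exact lt_asymm hlt hlt'
    · exact (ne_of_lt hlt') (hk k' hc).symm
  · exact lt_irrefl _ hlt

lemma bool_ne_true {a b : Bool} (h : a ≠ b) (hb : b = true) : a = false := by
  subst hb; simpa using h

lemma bool_ne_false {a b : Bool} (h : a ≠ b) (hb : b = false) : a = true := by
  subst hb; simpa using h

lemma seqDist_agree {x y : ℕ → Bool} {N : ℕ}
    (h : seqDist x y < (2 : ℝ)⁻¹ ^ N) : ∀ i < N, x i = y i := by
  intro i hi
  by_contra hne
  have hxy : x ≠ y := fun he => hne (congrFun he i)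
  have hex : ∃ i, x i ≠ y i := ⟨i, hne⟩
  have hval : seqDist x y = (2 : ℝ)⁻¹ ^ Nat.find hex := by
    simp only [seqDist]
    rw [dif_neg hxy]
  rw [hval] at h
  have hNK : N < Nat.find hex := by
    by_contra hle
    push_neg at hle
    have := pow_le_pow_of_le_one (by norm_num : (0:ℝ) ≤ 2⁻¹) (by norm_num) hle
    linarith
  exact Nat.find_min hex (lt_trans hi hNK) hne

/-- If `σ^m(mu) = alpha` and `σ^n(alpha) = mu` for some `m, n ≥ 1`, then
`(mu, alpha)` is an isolated point of `V'_2` (for the max metric). -/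
theorem stmt8 (mu alpha : ℕ → Bool) (h : (mu, alpha) ∈ V2')
    (m n : ℕ) (hm : 1 ≤ m) (hn : 1 ≤ n)
    (h1 : shift^[m] mu = alpha) (h2 : shift^[n] alpha = mu) :
    ∃ ε > (0 : ℝ), ∀ p ∈ V2',
      max (seqDist p.1 mu) (seqDist p.2 alpha) < ε → p = (mu, alpha) := by
  have hma : ∀ i, mu (i + m) = alpha i := fun i => by
    have := congrFun h1 i; rwa [shift_iter] at this
  have han : ∀ i, alpha (i + n) = mu i := fun i => by
    have := congrFun h2 i; rwa [shift_iter] at this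
  set P := n + m with hP
  have hP0 : 0 < P := by omega
  have hmuP : ∀ i, mu (i + P) = mu i := fun i => by
    rw [hP, show i + (n + m) = (i + n) + m by ring, hma]
    exact han i
  have haP : ∀ i, alpha (i + P) = alpha i := fun i => by
    rw [hP, show i + (n + m) = (i + m) + n by ring, han]
    exact hma i
  have hmuQ : ∀ s i, mu (i + s * P) = mu i := by
    intro s
    induction s with
    | zero => intro i; simp
    | succ s ih =>
      intro i
      rw [show i + (s + 1) * P = (i + s * P) + P by ring, hmuP, ih]
  have haQ : ∀ s i, alpha (i + s * P) = alpha i := by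
    intro s
    induction s with
    | zero => intro i; simp
    | succ s ih =>
      intro i
      rw [show i + (s + 1) * P = (i + s * P) + P by ring, haP, ih]
  have hmuD : ∀ t i, P ∣ t → mu (i + t) = mu i := by
    rintro t i ⟨s, rfl⟩
    rw [mul_comm]
    exact hmuQ s i
  have haD : ∀ t i, P ∣ t → alpha (i + t) = alpha i := by
    rintro t i ⟨s, rfl⟩
    rw [mul_comm]
    exact haQ s i
  have hdecomp : ∀ j, 2 * P ≤ j → ∃ t r, r < P ∧ P ∣ t ∧ j = t + P + r := by
    intro j hj
    have h1' : 1 ≤ j / P := (Nat.one_le_div_iff hP0).mpr (by omega)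
    obtain ⟨s, hs⟩ := Nat.exists_eq_add_of_le h1'
    have h2' := Nat.div_add_mod j P
    rw [hs, Nat.mul_add, Nat.mul_one] at h2'
    refine ⟨P * s, j % P, Nat.mod_lt _ hP0, dvd_mul_right P s, ?_⟩
    calc j = P + P * s + j % P := h2'.symm
    _ = P * s + P + j % P := by ring
  refine ⟨(2:ℝ)⁻¹ ^ (2 * P), pow_pos (by norm_num) _, ?_⟩
  rintro ⟨x, y⟩ ⟨-, -, hx0, hy0⟩ hd
  have hx : ∀ k, lexLe x (shift^[k] x) ∧ lexLe (shift^[k] x) y := hx0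
  have hy : ∀ k, lexLe x (shift^[k] y) ∧ lexLe (shift^[k] y) y := hy0
  have hxagree : ∀ i < 2 * P, x i = mu i :=
    seqDist_agree (lt_of_le_of_lt (le_max_left _ _) hd)
  have hyagree : ∀ i < 2 * P, y i = alpha i :=
    seqDist_agree (lt_of_le_of_lt (le_max_right _ _) hd)
  have hxeq : x = mu := by
    by_contra hne
    have hex : ∃ i, x i ≠ mu i := Function.ne_iff.mp hne
    have hjne : x (Nat.find hex) ≠ mu (Nat.find hex) := Nat.find_spec hex
    have hmin : ∀ i < Nat.find hex, x i = mu i := fun i hi => not_not.mp (Nat.find_min hex hi)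
    set j := Nat.find hex with hjdef
    have hjN : 2 * P ≤ j := by
      by_contra hlt
      exact hjne (hxagree j (by omega))
    obtain ⟨t, r, hrP, htd, hsr⟩ := hdecomp j hjN
    cases hmj : mu j with
    | true =>
      have hxj : x j = false := bool_ne_true hjne hmj
      have hmr : mu r = true := by
        rw [← hmuD (t + P) r (dvd_add htd dvd_rfl), show r + (t + P) = j by omega, hmj]
      refine lexLt_irrefl' ?_ (hx (t + P)).1
      refine ⟨r, fun i hi => ?_, ?_⟩
      · rw [shift_iter, hmin (i + (t + P)) (by omega), hmuD (t + P) i (dvd_add htd dvd_rfl),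
          hmin i (by omega)]
      · rw [shift_iter, show r + (t + P) = j by omega, hxj, hmin r (by omega), hmr]
        decide
    | false =>
      have hxj : x j = true := bool_ne_false hjne hmj
      refine lexLt_irrefl' ?_ (hx (t + m)).2
      refine ⟨n + r, fun i hi => ?_, ?_⟩
      · rw [shift_iter, hyagree i (by omega), hmin (i + (t + m)) (by omega),
          show i + (t + m) = (i + m) + t by ring, hmuD t (i + m) htd, hma]
      · rw [shift_iter, show n + r + (t + m) = j by omega, hxj, hyagree (n + r) (by omega)]
        have : alpha (n + r) = false := by
          rw [show n + r = r + n by ring, han,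
            ← hmuD (t + P) r (dvd_add htd dvd_rfl), show r + (t + P) = j by omega, hmj]
        rw [this]
        decide
  have hyeq : y = alpha := by
    by_contra hne
    have hex : ∃ i, y i ≠ alpha i := Function.ne_iff.mp hne
    have hjne : y (Nat.find hex) ≠ alpha (Nat.find hex) := Nat.find_spec hex
    have hmin : ∀ i < Nat.find hex, y i = alpha i := fun i hi => not_not.mp (Nat.find_min hex hi)
    set j := Nat.find hex with hjdef
    have hjN : 2 * P ≤ j := by
      by_contra hlt
      exact hjne (hyagree j (by omega))
    obtain ⟨t, r, hrP, htd, hsr⟩ := hdecomp j hjN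
    cases hmj : alpha j with
    | false =>
      have hyj : y j = true := bool_ne_false hjne hmj
      have har : alpha r = false := by
        rw [← haD (t + P) r (dvd_add htd dvd_rfl), show r + (t + P) = j by omega, hmj]
      refine lexLt_irrefl' ?_ (hy (t + P)).2
      refine ⟨r, fun i hi => ?_, ?_⟩
      · rw [shift_iter, hmin (i + (t + P)) (by omega), haD (t + P) i (dvd_add htd dvd_rfl),
          hmin i (by omega)]
      · rw [shift_iter, show r + (t + P) = j by omega, hyj, hmin r (by omega), har]
        decide
    | true =>
      have hyj : y j = false := bool_ne_true hjne hmj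
      refine lexLt_irrefl' ?_ (hy (t + n)).1
      refine ⟨m + r, fun i hi => ?_, ?_⟩
      · rw [shift_iter, hmin (i + (t + n)) (by omega),
          show i + (t + n) = (i + n) + t by ring, haD t (i + n) htd, han, hxeq]
      · rw [shift_iter, show m + r + (t + n) = j by omega, hyj, hxeq]
        have : mu (m + r) = true := by
          rw [← han (m + r), show m + r + n = r + P by omega, haP,
            ← haD (t + P) r (dvd_add htd dvd_rfl), show r + (t + P) = j by omega, hmj]
        rw [this]
        decide
  simp only [Prod.mk.injEq]
  exact ⟨hxeq, hyeq⟩
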